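/- Let e, r be nonnegative integers with e² > 4r, let u = (e−√(e²−4r))/2 and v = (e+√(e²−4r))/2, and let p, q be nonnegative integers with p ≥ 1. Suppose the formal power series (p − qt)/((1−ut)(1−vt)) = Σ c_i t^i has all coefficients c_i ≥ 0 (in ℝ). Then q ≤ vp; moreover, if q = vp then u and v are integers and (p − qt)/((1−ut)(1−vt)) = p/(1−ut). -/

import Mathlib

open PowerSeries Filter

private lemma geo_series (w : ℝ) :
    (1 - C w * X) * PowerSeries.mk (fun n => w ^ n) = 1 := by
  ext n
  cases n with
  | zero => simp
  | succ k =>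
    rw [sub_mul, one_mul, map_sub, coeff_mk, mul_assoc, coeff_C_mul, coeff_succ_X_mul,
      coeff_mk, pow_succ, coeff_one]
    simp [mul_comm]

/-- numerical content of Corollary 1.6. If `e² > 4r`,
`u = (e−√(e²−4r))/2`, `v = (e+√(e²−4r))/2`, `p ≥ 1`, and the power series
`Σ c_i t^i = (p − q t)/((1−ut)(1−vt))` has all coefficients `c_i ≥ 0`, then
`q ≤ v p`; and if `q = v p` then `u, v ∈ ℤ` and the series equals `p/(1−ut)`. -/
theorem stmt1 (e r p q : ℕ) (he : 4 * r < e ^ 2) (hp : 1 ≤ p)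
    (u v : ℝ) (hu : u = ((e : ℝ) - Real.sqrt ((e : ℝ) ^ 2 - 4 * r)) / 2)
    (hv : v = ((e : ℝ) + Real.sqrt ((e : ℝ) ^ 2 - 4 * r)) / 2)
    (c : ℕ → ℝ)
    (hc : (PowerSeries.mk c) *
        ((1 - PowerSeries.C u * PowerSeries.X) * (1 - PowerSeries.C v * PowerSeries.X)) =
      PowerSeries.C (p : ℝ) - PowerSeries.C (q : ℝ) * PowerSeries.X)
    (hnn : ∀ i, 0 ≤ c i) :
    (q : ℝ) ≤ v * p ∧
      ((q : ℝ) = v * p →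
        (∃ m : ℤ, u = (m : ℝ)) ∧ (∃ n : ℤ, v = (n : ℝ)) ∧
        (PowerSeries.mk c) * (1 - PowerSeries.C u * PowerSeries.X) =
          PowerSeries.C (p : ℝ)) := by
  set s : ℝ := Real.sqrt ((e : ℝ) ^ 2 - 4 * r) with hs
  have hepos : (0:ℝ) < (e : ℝ) ^ 2 - 4 * r := by
    have : (4 * r : ℝ) < (e : ℝ) ^ 2 := by exact_mod_cast he
    push_cast at this ⊢; linarith
  have hspos : 0 < s := Real.sqrt_pos.mpr hepos
  have hsq : s ^ 2 = (e : ℝ) ^ 2 - 4 * r := Real.sq_sqrt hepos.le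
  have hse : s ≤ (e : ℝ) := by
    have h1 : s ≤ Real.sqrt ((e : ℝ) ^ 2) := Real.sqrt_le_sqrt (by have : (0:ℝ) ≤ (r:ℝ) := Nat.cast_nonneg r; linarith)
    rwa [Real.sqrt_sq (by positivity)] at h1
  have hu0 : 0 ≤ u := by rw [hu]; linarith
  have hvpos : 0 < v := by rw [hv]; positivity
  have huv : u < v := by rw [hu, hv]; linarith
  have hvu : v - u = s := by rw [hu, hv]; ring
  have hvune : v - u ≠ 0 := by rw [hvu]; exact hspos.ne'
  set b : ℝ := (v * p - q) / (v - u) with hbdef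
  set a : ℝ := (p : ℝ) - b with hadef
  have hbvu : b * (v - u) = v * p - q := div_mul_cancel₀ _ hvune
  -- the explicit series
  have hsplit : PowerSeries.mk (fun n => a * u ^ n + b * v ^ n) =
      C a * PowerSeries.mk (fun n => u ^ n) + C b * PowerSeries.mk (fun n => v ^ n) := by
    ext n; simp [coeff_mk, coeff_C_mul]
  have key : PowerSeries.mk (fun n => a * u ^ n + b * v ^ n) *
      ((1 - C u * X) * (1 - C v * X)) =
      C (p : ℝ) - C (q : ℝ) * X := by
    rw [hsplit]
    have h1 : (C a * PowerSeries.mk (fun n => u ^ n) + C b * PowerSeries.mk (fun n => v ^ n)) *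
        ((1 - C u * X) * (1 - C v * X)) =
        C a * ((1 - C u * X) * PowerSeries.mk (fun n => u ^ n)) * (1 - C v * X) +
        C b * ((1 - C v * X) * PowerSeries.mk (fun n => v ^ n)) * (1 - C u * X) := by
      ring
    rw [h1, geo_series u, geo_series v]
    have h2 : (p : ℝ) = a + b := by rw [hadef]; ring
    have h3 : (q : ℝ) = a * v + b * u := by
      rw [hadef]; have := hbvu; ring_nf; ring_nf at this; linarith
    rw [h2, h3, map_add, map_add, map_mul, map_mul]
    ring
  have hGne : ((1 - C u * X) * (1 - C v * X)) ≠ 0 := by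
    intro h
    have h0 := congrArg (constantCoeff) h
    simp at h0
  have hmk : PowerSeries.mk c = PowerSeries.mk (fun n => a * u ^ n + b * v ^ n) :=
    mul_right_cancel₀ hGne (hc.trans key.symm)
  have hcn : ∀ n, c n = a * u ^ n + b * v ^ n := by
    intro n
    have := congrArg (coeff n) hmk
    simpa using this
  -- b ≥ 0 via limit
  have huv1 : u / v < 1 := (div_lt_one hvpos).mpr huv
  have huv0 : 0 ≤ u / v := div_nonneg hu0 hvpos.le
  have hlim : Tendsto (fun n : ℕ => c n / v ^ n) atTop (nhds b) := by
    have heq : (fun n : ℕ => c n / v ^ n) = fun n : ℕ => a * (u / v) ^ n + b := by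
      funext n
      rw [hcn n, div_pow]
      have hvn : v ^ n ≠ 0 := pow_ne_zero n hvpos.ne'
      field_simp
    rw [heq]
    have h0 : Tendsto (fun n : ℕ => (u / v) ^ n) atTop (nhds 0) :=
      tendsto_pow_atTop_nhds_zero_of_lt_one huv0 huv1
    have := (h0.const_mul a).add_const b
    simpa using this
  have hb0 : 0 ≤ b :=
    ge_of_tendsto hlim (Filter.Eventually.of_forall fun n =>
      div_nonneg (hnn n) (pow_nonneg hvpos.le n))
  have hqvp : (q : ℝ) ≤ v * p := by nlinarith [mul_nonneg hb0 (sub_pos.mpr huv).le]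
  refine ⟨hqvp, fun hq => ?_⟩
  -- equality case
  have hb : b = 0 := by rw [hbdef, hq]; simp
  have ha : a = (p : ℝ) := by rw [hadef, hb]; ring
  have hpne : (p : ℝ) ≠ 0 := by positivity
  -- v is rational
  have hvq : v = (q : ℝ) / (p : ℝ) := by rw [hq]; field_simp
  have hsv : s = 2 * v - e := by rw [hv]; ring
  have hrat : ¬ Irrational s := by
    intro hirr
    exact hirr ⟨2 * ((q : ℚ) / (p : ℚ)) - (e : ℚ), by push_cast; rw [← hvq, ← hsv]⟩
  have hcast : (e : ℝ) ^ 2 - 4 * r = ((e ^ 2 - 4 * r : ℕ) : ℝ) := by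
    push_cast [Nat.cast_sub he.le]; ring
  have hsquare : IsSquare (e ^ 2 - 4 * r) := by
    by_contra h
    exact hrat (by rw [hs, hcast]; exact irrational_sqrt_natCast_iff.mpr h)
  obtain ⟨k, hk⟩ := hsquare
  have hsk : s = (k : ℝ) := by
    rw [hs, hcast, hk]
    push_cast
    exact Real.sqrt_mul_self (by positivity)
  have he2 : e ^ 2 = 4 * r + k * k := by omega
  have hek : Even (e + k) := by
    have h2 : Even ((e + k) ^ 2) := by
      refine ⟨2 * r + k * k + e * k, ?_⟩
      zify at he2 ⊢
      linear_combination he2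
    exact (Nat.even_pow.mp h2).1
  obtain ⟨m, hm⟩ := hek
  have hvm : v = ((m : ℤ) : ℝ) := by
    have hm' : (e : ℝ) + k = m + m := by exact_mod_cast congrArg (Nat.cast : ℕ → ℝ) hm
    rw [hv, ← hsk] at *
    push_cast
    rw [hv, ← hsk]
    linarith
  have hum : u = (((e : ℤ) - m : ℤ) : ℝ) := by
    have hsum : u + v = e := by rw [hu, hv]; ring
    push_cast
    rw [hvm] at hsum
    push_cast at hsum
    linarith
  refine ⟨⟨(e : ℤ) - m, hum⟩, ⟨(m : ℤ), hvm⟩, ?_⟩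
  have hcp : PowerSeries.mk c = C (p : ℝ) * PowerSeries.mk (fun n => u ^ n) := by
    rw [hmk]
    ext n
    simp only [coeff_mk, coeff_C_mul, hb, ha]
    ring
  rw [hcp]
  calc C (p : ℝ) * PowerSeries.mk (fun n => u ^ n) * (1 - C u * X)
      = C (p : ℝ) * ((1 - C u * X) * PowerSeries.mk (fun n => u ^ n)) := by ring
    _ = C (p : ℝ) := by rw [geo_series u, mul_one]
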